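/- Let X and Y be Banach spaces and let L be a locally compact Hausdorff space. If the pair (X,Y) has the generalized AHSP and every bounded linear operator from X into C_0(L,Y) is compact, then the pair (X, C_0(L,Y)) has the generalized AHSP. -/

import Mathlib

open ZeroAtInfty Filter Topology Set

namespace AHSPaux

variable {𝕜 X Y L : Type*} [RCLike 𝕜]
    [NormedAddCommGroup X] [NormedSpace 𝕜 X]
    [NormedAddCommGroup Y] [NormedSpace 𝕜 Y]
    [TopologicalSpace L]

theorem norm_apply_le (f : C₀(L, Y)) (t : L) : ‖f t‖ ≤ ‖f‖ := by
  rw [← ZeroAtInftyContinuousMap.norm_toBCF_eq_norm]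
  exact f.toBCF.norm_coe_le_norm t

theorem norm_le_iff {M : ℝ} (hM : 0 ≤ M) (f : C₀(L, Y)) : ‖f‖ ≤ M ↔ ∀ t, ‖f t‖ ≤ M := by
  rw [← ZeroAtInftyContinuousMap.norm_toBCF_eq_norm]
  exact BoundedContinuousFunction.norm_le hM

theorem exists_norm_apply_gt [Nonempty L] (f : C₀(L, Y)) {c : ℝ} (hc : c < ‖f‖) :
    ∃ t, c < ‖f t‖ := by
  by_contra hcon
  push_neg at hcon
  have hc0 : 0 ≤ c := le_trans (norm_nonneg _) (hcon (Classical.arbitrary L))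
  have : ‖f‖ ≤ c := (norm_le_iff hc0 f).2 hcon
  exact absurd hc (not_lt.2 this)

/-- Oscillation control near a point, from compactness of the operator. -/
theorem exists_osc (T : X →L[𝕜] C₀(L, Y)) (hT : IsCompactOperator T) (t₀ : L)
    {δ : ℝ} (hδ : 0 < δ) :
    ∃ V : Set L, IsOpen V ∧ t₀ ∈ V ∧
      ∀ x : X, ‖x‖ ≤ 1 → ∀ t ∈ V, ‖T x t - T x t₀‖ ≤ δ := by
  have hK : IsCompact (closure (T '' Metric.closedBall 0 1)) :=
    hT.isCompact_closure_image_closedBall (𝕜₁ := 𝕜) 1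
  obtain ⟨s, hsfin, hscover⟩ :=
    (Metric.totallyBounded_iff.1 hK.totallyBounded) (δ/3) (by linarith)
  refine ⟨⋂ f ∈ s, {t : L | ‖(f : C₀(L,Y)) t - f t₀‖ < δ/3}, ?_, ?_, ?_⟩
  · exact hsfin.isOpen_biInter fun f _ =>
      isOpen_lt (((map_continuous f).sub continuous_const).norm) continuous_const
  · exact Set.mem_iInter₂.2 fun f _ => by simp only [Set.mem_setOf_eq, sub_self, norm_zero]; linarith
  · intro x hx t ht
    have hmem : T x ∈ ⋃ y ∈ s, Metric.ball y (δ/3) :=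
      hscover (subset_closure (Set.mem_image_of_mem T (by simpa using hx)))
    obtain ⟨f, hfs, hf⟩ := Set.mem_iUnion₂.1 hmem
    rw [Metric.mem_ball, dist_eq_norm] at hf
    have h1 : ∀ u, ‖T x u - f u‖ ≤ ‖T x - f‖ := fun u => by
      simpa using norm_apply_le (T x - f) u
    have ht' : ‖f t - f t₀‖ < δ/3 := Set.mem_iInter₂.1 ht f hfs
    have key : ‖T x t - T x t₀‖ ≤ ‖T x t - f t‖ + ‖f t - f t₀‖ + ‖f t₀ - T x t₀‖ := by
      calc ‖T x t - T x t₀‖ = ‖(T x t - f t) + (f t - f t₀) + (f t₀ - T x t₀)‖ := by congr 1; abel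
        _ ≤ _ := by
            refine le_trans (norm_add_le _ _) ?_
            gcongr
            exact norm_add_le _ _
    have e1 : ‖T x t - f t‖ < δ/3 := lt_of_le_of_lt (h1 t) hf
    have e2 : ‖f t₀ - T x t₀‖ < δ/3 := by
      rw [norm_sub_rev]; exact lt_of_le_of_lt (h1 t₀) hf
    linarith

/-- Evaluation at a point as a continuous linear map. -/
noncomputable def evCLM (𝕜 : Type*) [RCLike 𝕜] [NormedSpace 𝕜 Y] (t : L) : C₀(L, Y) →L[𝕜] Y :=
  LinearMap.mkContinuous
    { toFun := fun f => f t
      map_add' := fun f g => rfl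
      map_smul' := fun c f => rfl } 1
    (fun f => by simpa using norm_apply_le f t)

@[simp] theorem evCLM_apply (t : L) (f : C₀(L, Y)) : evCLM 𝕜 t f = f t := rfl

theorem evCLM_norm_le (t : L) : ‖(evCLM 𝕜 t : C₀(L, Y) →L[𝕜] Y)‖ ≤ 1 :=
  LinearMap.mkContinuous_norm_le _ zero_le_one _

/-- The lifted function used to glue `S'` into `T` near `t₀`. -/
noncomputable def liftFun (T : X →L[𝕜] C₀(L, Y)) (S' : X →L[𝕜] Y) (φ : C(L, ℝ))
    (hφ : HasCompactSupport φ) (x : X) : C₀(L, Y) where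
  toFun := fun t => (1 - ((φ t : ℝ) : 𝕜)) • T x t + ((φ t : ℝ) : 𝕜) • S' x
  continuous_toFun := by
    refine Continuous.add ?_ ?_
    · exact (continuous_const.sub (RCLike.continuous_ofReal.comp φ.continuous)).smul
        (map_continuous (T x))
    · exact (RCLike.continuous_ofReal.comp φ.continuous).smul continuous_const
  zero_at_infty' := by
    have heq : (fun t => (1 - ((φ t : ℝ) : 𝕜)) • T x t + ((φ t : ℝ) : 𝕜) • S' x)
        = fun t => T x t + ((φ t : ℝ) : 𝕜) • (S' x - T x t) := by
      funext t
      rw [sub_smul, one_smul, smul_sub]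
      abel
    have h2 : (fun t => ((φ t : ℝ) : 𝕜) • (S' x - T x t)) =ᶠ[Filter.cocompact L] 0 := by
      filter_upwards [Filter.mem_cocompact.2 ⟨tsupport φ, hφ, subset_rfl⟩] with t ht
      have : φ t = 0 := image_eq_zero_of_notMem_tsupport ht
      simp [this]
    have hb : Filter.Tendsto (fun t => ((φ t : ℝ) : 𝕜) • (S' x - T x t))
        (Filter.cocompact L) (𝓝 0) := Filter.Tendsto.congr' h2.symm tendsto_const_nhds
    exact Filter.Tendsto.congr (fun t => (congrFun heq t).symm)
      (by simpa using Filter.Tendsto.add (zero_at_infty (T x)) hb)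

@[simp] theorem liftFun_apply (T : X →L[𝕜] C₀(L, Y)) (S' : X →L[𝕜] Y) (φ : C(L, ℝ))
    (hφ : HasCompactSupport φ) (x : X) (t : L) :
    liftFun T S' φ hφ x t = (1 - ((φ t : ℝ) : 𝕜)) • T x t + ((φ t : ℝ) : 𝕜) • S' x := rfl

section Lift
variable [LocallyCompactSpace L] [T2Space L]

theorem exists_lift (t₀ : L) (T : X →L[𝕜] C₀(L, Y)) (hT : IsCompactOperator T) (hTn : ‖T‖ ≤ 1)
    (S' : X →L[𝕜] Y) (hSn : ‖S'‖ ≤ 1) {δ : ℝ} (hδ : 0 < δ) :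
    ∃ S : X →L[𝕜] C₀(L, Y), (∀ x, S x t₀ = S' x) ∧ ‖S‖ ≤ 1 ∧
      ‖S - T‖ ≤ ‖S' - (evCLM 𝕜 t₀).comp T‖ + δ := by
  classical
  obtain ⟨V, hVopen, hVt₀, hosc⟩ := exists_osc T hT t₀ hδ
  obtain ⟨φ, hφ1, hφ0, hφsupp, hφmem⟩ :=
    exists_continuous_one_zero_of_isCompact (isCompact_singleton (x := t₀))
      hVopen.isClosed_compl (Set.disjoint_singleton_left.2 (by simpa using hVt₀))
  have hφt₀ : φ t₀ = 1 := hφ1 rfl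
  have hφ01 : ∀ t, 0 ≤ φ t ∧ φ t ≤ 1 := fun t => ⟨(hφmem t).1, (hφmem t).2⟩
  -- general-x oscillation bound
  have hosc' : ∀ (x : X), ∀ t ∈ V, ‖T x t - T x t₀‖ ≤ δ * ‖x‖ := by
    intro x t ht
    rcases eq_or_ne x 0 with rfl | hx0
    · simp
    · have hxn : ((‖x‖ : ℝ) : 𝕜) ≠ 0 := by
        rw [Ne, RCLike.ofReal_eq_zero]
        exact norm_ne_zero_iff.2 hx0
      set u : X := ((‖x‖ : ℝ) : 𝕜)⁻¹ • x with hu_def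
      have hu : ‖u‖ = 1 := by
        rw [hu_def, norm_smul, norm_inv, RCLike.norm_ofReal, abs_of_nonneg (norm_nonneg x)]
        field_simp
      have hxu : x = ((‖x‖ : ℝ) : 𝕜) • u := by
        rw [hu_def, smul_inv_smul₀ hxn]
      have : T x t - T x t₀ = ((‖x‖ : ℝ) : 𝕜) • (T u t - T u t₀) := by
        conv_lhs => rw [hxu]
        rw [map_smul, smul_sub]
        rfl
      rw [this, norm_smul, RCLike.norm_ofReal, abs_of_nonneg (norm_nonneg x), mul_comm]
      exact mul_le_mul_of_nonneg_right (hosc u hu.le t ht) (norm_nonneg x)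
  have hnormbound : ∀ x : X, ‖liftFun T S' φ hφsupp x‖ ≤ 1 * ‖x‖ := by
    intro x
    rw [one_mul]
    refine (norm_le_iff (norm_nonneg x) _).2 fun t => ?_
    have e1 : ‖(1 - ((φ t : ℝ) : 𝕜))‖ = 1 - φ t := by
      rw [show (1 - ((φ t : ℝ) : 𝕜)) = (((1 - φ t : ℝ)) : 𝕜) by push_cast; ring,
        RCLike.norm_ofReal, abs_of_nonneg (by linarith [(hφ01 t).2])]
    have e2 : ‖((φ t : ℝ) : 𝕜)‖ = φ t := by
      rw [RCLike.norm_ofReal, abs_of_nonneg (hφ01 t).1]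
    have b1 : ‖T x t‖ ≤ ‖x‖ := le_trans (norm_apply_le (T x) t)
      (le_trans (T.le_opNorm x) (by nlinarith [norm_nonneg x]))
    have b2 : ‖S' x‖ ≤ ‖x‖ := le_trans (S'.le_opNorm x) (by nlinarith [norm_nonneg x])
    calc ‖liftFun T S' φ hφsupp x t‖
        ≤ ‖(1 - ((φ t : ℝ) : 𝕜)) • T x t‖ + ‖((φ t : ℝ) : 𝕜) • S' x‖ := norm_add_le _ _
      _ = (1 - φ t) * ‖T x t‖ + φ t * ‖S' x‖ := by rw [norm_smul, norm_smul, e1, e2]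
      _ ≤ (1 - φ t) * ‖x‖ + φ t * ‖x‖ := by
          have := (hφ01 t).1; have := (hφ01 t).2
          gcongr <;> linarith
      _ = ‖x‖ := by ring
  set Slin : X →ₗ[𝕜] C₀(L, Y) :=
    { toFun := liftFun T S' φ hφsupp
      map_add' := by
        intro a b
        ext t
        simp only [liftFun_apply, map_add, ZeroAtInftyContinuousMap.coe_add, Pi.add_apply,
          smul_add]
        abel
      map_smul' := by
        intro c a
        ext t
        simp only [liftFun_apply, map_smul, ZeroAtInftyContinuousMap.coe_smul, Pi.smul_apply,
          RingHom.id_apply, smul_add, smul_comm c] } with hSlin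
  refine ⟨LinearMap.mkContinuous Slin 1 hnormbound, ?_, ?_, ?_⟩
  · intro x
    show liftFun T S' φ hφsupp x t₀ = S' x
    simp [hφt₀]
  · exact LinearMap.mkContinuous_norm_le _ zero_le_one _
  · set D := ‖S' - (evCLM 𝕜 t₀).comp T‖ with hD
    refine ContinuousLinearMap.opNorm_le_bound _ (by positivity) fun x => ?_
    refine (norm_le_iff (by positivity) _).2 fun t => ?_
    have happ : (LinearMap.mkContinuous Slin 1 hnormbound - T) x t
        = ((φ t : ℝ) : 𝕜) • (S' x - T x t) := by
      show liftFun T S' φ hφsupp x t - T x t = _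
      rw [liftFun_apply, sub_smul, one_smul, smul_sub]
      abel
    rw [happ, norm_smul, RCLike.norm_ofReal, abs_of_nonneg (hφ01 t).1]
    rcases eq_or_ne (φ t) 0 with h0 | h0
    · rw [h0, zero_mul]; positivity
    · have htV : t ∈ V := by
        by_contra htV
        exact h0 (hφ0 htV)
      have key : ‖S' x - T x t‖ ≤ (D + δ) * ‖x‖ := by
        have d1 : ‖S' x - T x t₀‖ ≤ D * ‖x‖ := by
          have : S' x - T x t₀ = (S' - (evCLM 𝕜 t₀).comp T) x := by simp
          rw [this]
          exact (S' - (evCLM 𝕜 t₀).comp T).le_opNorm x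
        have d2 : ‖T x t₀ - T x t‖ ≤ δ * ‖x‖ := by
          rw [norm_sub_rev]; exact hosc' x t htV
        calc ‖S' x - T x t‖ = ‖(S' x - T x t₀) + (T x t₀ - T x t)‖ := by congr 1; abel
          _ ≤ ‖S' x - T x t₀‖ + ‖T x t₀ - T x t‖ := norm_add_le _ _
          _ ≤ D * ‖x‖ + δ * ‖x‖ := add_le_add d1 d2
          _ = (D + δ) * ‖x‖ := by ring
      calc φ t * ‖S' x - T x t‖ ≤ 1 * ‖S' x - T x t‖ :=
            mul_le_mul_of_nonneg_right (hφ01 t).2 (norm_nonneg _)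
        _ = ‖S' x - T x t‖ := one_mul _
        _ ≤ (D + δ) * ‖x‖ := key

end Lift

end AHSPaux

/-- The generalized approximate hyperplane series property for a pair `(X, Y)`. -/
def GenAHSP (𝕜 X Y : Type*) [RCLike 𝕜] [NormedAddCommGroup X] [NormedSpace 𝕜 X]
    [NormedAddCommGroup Y] [NormedSpace 𝕜 Y] : Prop :=
  ∀ ε > (0 : ℝ), ∃ η : ℝ, 0 < η ∧ η < ε ∧
    ∀ (T : ℕ → X →L[𝕜] Y) (x : ℕ → X) (α : ℕ → ℝ),
      (∀ k, ‖T k‖ = 1) → (∀ k, ‖x k‖ = 1) → (∀ k, 0 ≤ α k) → HasSum α 1 →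
      ‖∑' k, ((α k : 𝕜) • T k (x k))‖ > 1 - η →
      ∃ (A : Set ℕ) (y : Y →L[𝕜] 𝕜) (S : ℕ → X →L[𝕜] Y) (z : ℕ → X),
        ‖y‖ = 1 ∧ (∀ k, ‖S k‖ = 1) ∧ (∀ k, ‖z k‖ = 1) ∧
        (∑' k : A, α k) > 1 - ε ∧
        (∀ k ∈ A, ‖z k - x k‖ < ε ∧ ‖S k - T k‖ < ε) ∧
        (∀ k ∈ A, y (S k (z k)) = 1)

set_option maxHeartbeats 1000000
open AHSPaux
theorem genAHSP_C0 (𝕜 X Y L : Type*) [RCLike 𝕜]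
    [NormedAddCommGroup X] [NormedSpace 𝕜 X] [CompleteSpace X]
    [NormedAddCommGroup Y] [NormedSpace 𝕜 Y] [CompleteSpace Y]
    [TopologicalSpace L] [LocallyCompactSpace L] [T2Space L] [Nonempty L]
    (h : GenAHSP 𝕜 X Y)
    (hcomp : ∀ T : X →L[𝕜] C₀(L, Y), IsCompactOperator T) :
    GenAHSP 𝕜 X C₀(L, Y) := by
  classical
  intro ε hε
  set ε₁ : ℝ := min ε 1 with hε₁def
  have hε₁pos : 0 < ε₁ := lt_min hε one_pos
  have hε₁le : ε₁ ≤ ε := min_le_left _ _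
  have hε₁le1 : ε₁ ≤ 1 := min_le_right _ _
  set ε' : ℝ := ε₁ / 3 with hε'def
  have hε'pos : 0 < ε' := by positivity
  have hε'le : ε' ≤ 1/3 := by rw [hε'def]; linarith
  obtain ⟨η₀, hη₀pos, hη₀lt, H⟩ := h ε' hε'pos
  set η : ℝ := min (η₀ / 2) (ε' ^ 2 / 4) with hηdef
  have hηpos : 0 < η := lt_min (by positivity) (by positivity)
  have hηε' : η < ε' := by
    have h1 : η ≤ ε' ^ 2 / 4 := min_le_right _ _
    nlinarith
  have hηlt : η < ε := by
    have : ε' < ε := by rw [hε'def]; linarith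
    linarith
  set r : ℝ := Real.sqrt η with hrdef
  have hrpos : 0 < r := Real.sqrt_pos.2 hηpos
  have hrr : r * r = η := Real.mul_self_sqrt hηpos.le
  have hrle : r ≤ ε' / 2 := by
    rw [hrdef]
    calc Real.sqrt η ≤ Real.sqrt (ε' ^ 2 / 4) := Real.sqrt_le_sqrt (min_le_right _ _)
      _ = ε' / 2 := by
          rw [show ε' ^ 2 / 4 = (ε' / 2) ^ 2 by ring, Real.sqrt_sq (by positivity)]
  refine ⟨η, hηpos, hηlt, ?_⟩
  intro T x α hT1 hx1 hα0 hαsum hbig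
  have hαsummable : Summable α := hαsum.summable
  have htsum1 : ∑' k, α k = 1 := hαsum.tsum_eq
  have hTx1 : ∀ k, ‖T k (x k)‖ ≤ 1 := fun k => by
    have := (T k).le_opNorm (x k)
    rwa [hT1 k, hx1 k, one_mul] at this
  have hFs : Summable fun k => (α k : 𝕜) • T k (x k) := by
    refine Summable.of_norm_bounded hαsummable fun k => ?_
    rw [norm_smul, RCLike.norm_ofReal, abs_of_nonneg (hα0 k)]
    calc α k * ‖T k (x k)‖ ≤ α k * 1 := by
          exact mul_le_mul_of_nonneg_left (hTx1 k) (hα0 k)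
      _ = α k := mul_one _
  obtain ⟨t₀, ht₀⟩ := exists_norm_apply_gt (∑' k, (α k : 𝕜) • T k (x k)) hbig
  set T' : ℕ → X →L[𝕜] Y := fun k => (evCLM 𝕜 t₀).comp (T k) with hT'def
  have hT'le : ∀ k, ‖T' k‖ ≤ 1 := fun k => by
    calc ‖T' k‖ ≤ ‖(evCLM 𝕜 t₀ : C₀(L,Y) →L[𝕜] Y)‖ * ‖T k‖ :=
          ContinuousLinearMap.opNorm_comp_le _ _
      _ ≤ 1 * 1 := mul_le_mul (evCLM_norm_le t₀) (hT1 k).le (norm_nonneg _) zero_le_one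
      _ = 1 := one_mul 1
  set c : ℕ → ℝ := fun k => ‖T' k (x k)‖ with hcdef
  have hc0 : ∀ k, 0 ≤ c k := fun k => norm_nonneg _
  have hc1 : ∀ k, c k ≤ 1 := fun k => by
    calc c k ≤ ‖T' k‖ * ‖x k‖ := (T' k).le_opNorm (x k)
      _ ≤ 1 * 1 := mul_le_mul (hT'le k) (hx1 k).le (norm_nonneg _) zero_le_one
      _ = 1 := one_mul 1
  have hcTnorm : ∀ k, c k ≤ ‖T' k‖ := fun k => by
    calc c k ≤ ‖T' k‖ * ‖x k‖ := (T' k).le_opNorm (x k)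
      _ = ‖T' k‖ := by rw [hx1 k, mul_one]
  -- evaluation of the sum at t₀
  have hF_ev : HasSum (fun k => (α k : 𝕜) • T' k (x k))
      ((∑' k, (α k : 𝕜) • T k (x k)) t₀) := by
    have h1 := hFs.hasSum.mapL (evCLM 𝕜 t₀)
    simpa [hT'def] using h1
  have hsnorm : Summable fun k => α k * c k := by
    refine hαsummable.of_nonneg_of_le (fun k => mul_nonneg (hα0 k) (hc0 k)) fun k => ?_
    calc α k * c k ≤ α k * 1 := mul_le_mul_of_nonneg_left (hc1 k) (hα0 k)
      _ = α k := mul_one _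
  have hc_big : 1 - η < ∑' k, α k * c k := by
    have hnorms : Summable fun k => ‖(α k : 𝕜) • T' k (x k)‖ := by
      refine hsnorm.congr fun k => ?_
      rw [norm_smul, RCLike.norm_ofReal, abs_of_nonneg (hα0 k)]
    calc 1 - η < ‖(∑' k, (α k : 𝕜) • T k (x k)) t₀‖ := ht₀
      _ = ‖∑' k, (α k : 𝕜) • T' k (x k)‖ := by rw [hF_ev.tsum_eq]
      _ ≤ ∑' k, ‖(α k : 𝕜) • T' k (x k)‖ := norm_tsum_le_tsum_norm hnorms
      _ = ∑' k, α k * c k := tsum_congr fun k => by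
            rw [norm_smul, RCLike.norm_ofReal, abs_of_nonneg (hα0 k)]
  have hsnorm' : Summable fun k => α k * (1 - c k) := by
    refine (hαsummable.sub hsnorm).congr fun k => ?_
    ring
  have hkey : ∑' k, α k * (1 - c k) < η := by
    have : ∑' k, α k * (1 - c k) = 1 - ∑' k, α k * c k := by
      rw [show (fun k => α k * (1 - c k)) = fun k => α k - α k * c k by funext k; ring,
        Summable.tsum_sub hαsummable hsnorm, htsum1]
    rw [this]; linarith
  set C : Set ℕ := {k | 1 - r < c k} with hCdef
  have hCc_le : (∑' k : ↥(Cᶜ), α k) ≤ r := by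
    have hind : ∀ k, r * (Cᶜ : Set ℕ).indicator α k ≤ α k * (1 - c k) := by
      intro k
      by_cases hk : k ∈ (Cᶜ : Set ℕ)
      · rw [Set.indicator_of_mem hk]
        have hck : c k ≤ 1 - r := by
          have : ¬ (1 - r < c k) := hk
          linarith [not_lt.1 this]
        calc r * α k = α k * r := mul_comm _ _
          _ ≤ α k * (1 - c k) := mul_le_mul_of_nonneg_left (by linarith) (hα0 k)
      · rw [Set.indicator_of_notMem hk, mul_zero]
        have := hc1 k
        nlinarith [hα0 k]
    have hsum_ind : Summable fun k => r * (Cᶜ : Set ℕ).indicator α k :=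
      (hαsummable.indicator _).mul_left r
    have h1 : r * ∑' k : ↥(Cᶜ), α k < r * r := by
      calc r * ∑' k : ↥(Cᶜ), α k = r * ∑' k, (Cᶜ : Set ℕ).indicator α k := by
            rw [tsum_subtype]
        _ = ∑' k, r * (Cᶜ : Set ℕ).indicator α k := (tsum_mul_left).symm
        _ ≤ ∑' k, α k * (1 - c k) := Summable.tsum_le_tsum hind hsum_ind hsnorm'
        _ < η := hkey
        _ = r * r := hrr.symm
    exact ((mul_lt_mul_iff_right₀ hrpos).1 h1).le
  -- nontrivial elements
  have hT0ne : T 0 ≠ 0 := by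
    intro h0
    have := hT1 0
    rw [h0, norm_zero] at this
    exact zero_ne_one this
  obtain ⟨x', hx'⟩ : ∃ x', T 0 x' ≠ 0 := by
    by_contra hcon
    push_neg at hcon
    exact hT0ne (ContinuousLinearMap.ext fun u => by rw [hcon u]; rfl)
  obtain ⟨t', ht'⟩ : ∃ t', T 0 x' t' ≠ 0 := by
    by_contra hcon
    push_neg at hcon
    exact hx' (ZeroAtInftyContinuousMap.ext fun u => by rw [hcon u]; rfl)
  set y₀ : Y := ((‖T 0 x' t'‖ : ℝ) : 𝕜)⁻¹ • (T 0 x' t') with hy₀def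
  have hy₀ : ‖y₀‖ = 1 := by
    rw [hy₀def, norm_smul, norm_inv, RCLike.norm_ofReal,
      abs_of_nonneg (norm_nonneg _)]
    exact inv_mul_cancel₀ (norm_ne_zero_iff.2 ht')
  obtain ⟨x₁s, hx₁n, hx₁v⟩ := exists_dual_vector 𝕜 (x 0)
    (by rw [← norm_ne_zero_iff, hx1 0]; norm_num)
  set W : X →L[𝕜] Y := x₁s.smulRight y₀ with hWdef
  have hWn : ‖W‖ = 1 := by
    rw [hWdef, ContinuousLinearMap.norm_smulRight_apply, hx₁n, hy₀, one_mul]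
  set f₀ : C₀(L, Y) := ((‖T 0 x'‖ : ℝ) : 𝕜)⁻¹ • (T 0 x') with hf₀def
  have hf₀ : ‖f₀‖ = 1 := by
    rw [hf₀def, norm_smul, norm_inv, RCLike.norm_ofReal,
      abs_of_nonneg (norm_nonneg _)]
    exact inv_mul_cancel₀ (norm_ne_zero_iff.2 hx')
  set U : X →L[𝕜] C₀(L, Y) := x₁s.smulRight f₀ with hUdef
  have hUn : ‖U‖ = 1 := by
    rw [hUdef, ContinuousLinearMap.norm_smulRight_apply, hx₁n, hf₀, one_mul]
  -- normalized pointwise operators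
  set Th : ℕ → X →L[𝕜] Y := fun k =>
    if T' k = 0 then W else ((‖T' k‖⁻¹ : ℝ) : 𝕜) • T' k with hThdef
  have hThn : ∀ k, ‖Th k‖ = 1 := by
    intro k
    simp only [hThdef]
    by_cases hk : T' k = 0
    · rw [if_pos hk]; exact hWn
    · rw [if_neg hk, norm_smul ((‖T' k‖⁻¹ : ℝ) : 𝕜) (T' k), RCLike.norm_ofReal,
        abs_of_nonneg (inv_nonneg.2 (norm_nonneg _))]
      exact inv_mul_cancel₀ (norm_ne_zero_iff.2 hk)
  have hThd : ∀ k, ‖Th k - T' k‖ ≤ 1 - ‖T' k‖ := by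
    intro k
    simp only [hThdef]
    by_cases hk : T' k = 0
    · rw [if_pos hk, hk, sub_zero, hWn, norm_zero, sub_zero]
    · rw [if_neg hk]
      have hpos : 0 < ‖T' k‖ := norm_pos_iff.2 hk
      have hinv : 1 ≤ ‖T' k‖⁻¹ := (one_le_inv₀ hpos).2 (hT'le k)
      have : ((‖T' k‖⁻¹ : ℝ) : 𝕜) • T' k - T' k = ((‖T' k‖⁻¹ - 1 : ℝ) : 𝕜) • T' k := by
        push_cast
        rw [sub_smul, one_smul]
      rw [this, norm_smul ((‖T' k‖⁻¹ - 1 : ℝ) : 𝕜) (T' k), RCLike.norm_ofReal,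
        abs_of_nonneg (by linarith)]
      rw [sub_mul, one_mul, inv_mul_cancel₀ hpos.ne']
  have hThx : ∀ k, ‖Th k (x k) - T' k (x k)‖ ≤ 1 - c k := by
    intro k
    calc ‖Th k (x k) - T' k (x k)‖ = ‖(Th k - T' k) (x k)‖ := by
          rw [ContinuousLinearMap.sub_apply]
      _ ≤ ‖Th k - T' k‖ * ‖x k‖ := (Th k - T' k).le_opNorm _
      _ = ‖Th k - T' k‖ := by rw [hx1 k, mul_one]
      _ ≤ 1 - ‖T' k‖ := hThd k
      _ ≤ 1 - c k := by linarith [hcTnorm k]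
  -- the series with normalized operators is still big
  have hS1 : Summable fun k => (α k : 𝕜) • T' k (x k) := hF_ev.summable
  have hS2 : Summable fun k => (α k : 𝕜) • (Th k (x k) - T' k (x k)) := by
    refine Summable.of_norm_bounded hαsummable fun k => ?_
    rw [norm_smul ((α k : ℝ) : 𝕜) (Th k (x k) - T' k (x k)), RCLike.norm_ofReal,
      abs_of_nonneg (hα0 k)]
    calc α k * ‖Th k (x k) - T' k (x k)‖ ≤ α k * 1 := by
          refine mul_le_mul_of_nonneg_left ?_ (hα0 k)
          linarith [hThx k, hc0 k]
      _ = α k := mul_one _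
  have hBle : ‖∑' k, (α k : 𝕜) • (Th k (x k) - T' k (x k))‖ < η := by
    have hn2 : Summable fun k => ‖(α k : 𝕜) • (Th k (x k) - T' k (x k))‖ := by
      refine hαsummable.of_nonneg_of_le (fun k => norm_nonneg _) fun k => ?_
      rw [norm_smul ((α k : ℝ) : 𝕜) (Th k (x k) - T' k (x k)), RCLike.norm_ofReal,
        abs_of_nonneg (hα0 k)]
      calc α k * ‖Th k (x k) - T' k (x k)‖ ≤ α k * 1 := by
            refine mul_le_mul_of_nonneg_left ?_ (hα0 k)
            linarith [hThx k, hc0 k]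
        _ = α k := mul_one _
    calc ‖∑' k, (α k : 𝕜) • (Th k (x k) - T' k (x k))‖
        ≤ ∑' k, ‖(α k : 𝕜) • (Th k (x k) - T' k (x k))‖ := norm_tsum_le_tsum_norm hn2
      _ ≤ ∑' k, α k * (1 - c k) := by
          refine Summable.tsum_le_tsum (fun k => ?_) hn2 hsnorm'
          rw [norm_smul, RCLike.norm_ofReal, abs_of_nonneg (hα0 k)]
          exact mul_le_mul_of_nonneg_left (hThx k) (hα0 k)
      _ < η := hkey
  have hsplit : (fun k => (α k : 𝕜) • Th k (x k))
      = fun k => (α k : 𝕜) • T' k (x k) + (α k : 𝕜) • (Th k (x k) - T' k (x k)) := by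
    funext k
    rw [← smul_add]
    congr 1
    abel
  have h2 : ‖∑' k, (α k : 𝕜) • Th k (x k)‖ > 1 - η₀ := by
    have htsum : ∑' k, (α k : 𝕜) • Th k (x k)
        = (∑' k, (α k : 𝕜) • T' k (x k)) + ∑' k, (α k : 𝕜) • (Th k (x k) - T' k (x k)) := by
      rw [hsplit, Summable.tsum_add hS1 hS2]
    have hA : 1 - η < ‖∑' k, (α k : 𝕜) • T' k (x k)‖ := by
      rw [hF_ev.tsum_eq]
      exact ht₀
    have htri : ‖∑' k, (α k : 𝕜) • T' k (x k)‖
        ≤ ‖∑' k, (α k : 𝕜) • Th k (x k)‖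
          + ‖∑' k, (α k : 𝕜) • (Th k (x k) - T' k (x k))‖ := by
      have heq2 : (∑' k, (α k : 𝕜) • T' k (x k))
          = (∑' k, (α k : 𝕜) • Th k (x k))
            - ∑' k, (α k : 𝕜) • (Th k (x k) - T' k (x k)) := by
        rw [htsum]; abel
      rw [heq2]
      exact norm_sub_le _ _
    have hη₀ : 2 * η ≤ η₀ := by
      have := min_le_left (η₀ / 2) (ε' ^ 2 / 4)
      rw [← hηdef] at this
      linarith
    linarith
  obtain ⟨A, ys, S', z, hysn, hS'n, hzn, hAsum, hclose, hattain⟩ :=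
    H Th x α hThn hx1 hα0 hαsum h2
  choose S₀ hS₀t hS₀n hS₀d using fun k =>
    exists_lift t₀ (T k) (hcomp (T k)) (hT1 k).le (S' k) (hS'n k).le hε'pos
  set A' : Set ℕ := A ∩ C with hA'def
  set S : ℕ → X →L[𝕜] C₀(L, Y) := fun k => if k ∈ A' then S₀ k else U with hSdef
  set y : C₀(L, Y) →L[𝕜] 𝕜 := ys.comp (evCLM 𝕜 t₀) with hydef
  have hyle : ‖y‖ ≤ 1 := by
    calc ‖y‖ ≤ ‖ys‖ * ‖(evCLM 𝕜 t₀ : C₀(L, Y) →L[𝕜] Y)‖ :=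
          ContinuousLinearMap.opNorm_comp_le _ _
      _ ≤ 1 * 1 := mul_le_mul (le_of_eq hysn) (evCLM_norm_le t₀)
          (norm_nonneg (evCLM 𝕜 t₀ : C₀(L, Y) →L[𝕜] Y)) zero_le_one
      _ = 1 := one_mul 1
  have hSle : ∀ k, ‖S k‖ ≤ 1 := by
    intro k
    simp only [hSdef]
    by_cases hk : k ∈ A'
    · rw [if_pos hk]; exact hS₀n k
    · rw [if_neg hk]; exact hUn.le
  have hA'lower : (∑' k : ↥A', α k) > 1 - ε₁ / 2 := by
    have hAsplit : (∑' k : ↥A, α k) ≤ (∑' k : ↥A', α k) + (∑' k : ↥(Cᶜ), α k) := by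
      rw [tsum_subtype, tsum_subtype, tsum_subtype]
      rw [← Summable.tsum_add (hαsummable.indicator A') (hαsummable.indicator Cᶜ)]
      refine Summable.tsum_le_tsum (fun k => ?_) (hαsummable.indicator A)
        ((hαsummable.indicator A').add (hαsummable.indicator Cᶜ))
      by_cases hkA : k ∈ A
      · rw [Set.indicator_of_mem hkA]
        by_cases hkC : k ∈ C
        · have hmem : k ∈ A' := ⟨hkA, hkC⟩
          rw [Set.indicator_of_mem hmem]
          exact le_add_of_nonneg_right (Set.indicator_nonneg (fun i _ => hα0 i) k)
        · have hmem : k ∈ (Cᶜ : Set ℕ) := hkC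
          rw [Set.indicator_of_mem hmem]
          exact le_add_of_nonneg_left (Set.indicator_nonneg (fun i _ => hα0 i) k)
      · rw [Set.indicator_of_notMem hkA]
        exact add_nonneg (Set.indicator_nonneg (fun i _ => hα0 i) k)
          (Set.indicator_nonneg (fun i _ => hα0 i) k)
    have hchain : (∑' k : ↥A', α k) ≥ (∑' k : ↥A, α k) - (∑' k : ↥(Cᶜ), α k) := by
      linarith
    have hEps : ε' + ε' / 2 = ε₁ / 2 := by rw [hε'def]; ring
    linarith [hAsum, hCc_le, hrle]
  have hA'sum : (∑' k : ↥A', α k) > 1 - ε := by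
    have : 1 - ε₁ / 2 > 1 - ε := by linarith
    linarith
  have hA'ne : A'.Nonempty := by
    rw [Set.nonempty_iff_ne_empty]
    intro h0
    have hz0 : (∑' k : ↥A', α k) = 0 := by
      rw [h0]
      exact tsum_empty
    rw [hz0] at hA'lower
    linarith
  have heval : ∀ k ∈ A', y (S k (z k)) = 1 := by
    intro k hk
    have hSk : S k = S₀ k := by simp only [hSdef]; rw [if_pos hk]
    rw [hSk, hydef]
    show ys ((S₀ k) (z k) t₀) = 1
    rw [hS₀t k (z k)]
    exact hattain k hk.1
  have hy1 : ‖y‖ = 1 := by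
    obtain ⟨k₀, hk₀⟩ := hA'ne
    refine le_antisymm hyle ?_
    have h1 : ‖y (S k₀ (z k₀))‖ = 1 := by rw [heval k₀ hk₀, norm_one]
    have h2 : ‖y (S k₀ (z k₀))‖ ≤ ‖y‖ * ‖S k₀ (z k₀)‖ := y.le_opNorm _
    have h3 : ‖S k₀ (z k₀)‖ ≤ 1 := by
      calc ‖S k₀ (z k₀)‖ ≤ ‖S k₀‖ * ‖z k₀‖ := (S k₀).le_opNorm _
        _ = ‖S k₀‖ := by rw [hzn k₀, mul_one]
        _ ≤ 1 := hSle k₀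
    nlinarith [norm_nonneg y]
  have hSnorm : ∀ k, ‖S k‖ = 1 := by
    intro k
    by_cases hk : k ∈ A'
    · refine le_antisymm (hSle k) ?_
      have h1 : ‖y (S k (z k))‖ = 1 := by rw [heval k hk, norm_one]
      have h2 : ‖y (S k (z k))‖ ≤ ‖y‖ * (‖S k‖ * ‖z k‖) := by
        refine le_trans (y.le_opNorm _) ?_
        exact mul_le_mul_of_nonneg_left ((S k).le_opNorm _) (norm_nonneg y)
      rw [hy1, hzn k, one_mul, mul_one] at h2
      linarith
    · simp only [hSdef]
      rw [if_neg hk]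
      exact hUn
  have hfinal_close : ∀ k ∈ A', ‖z k - x k‖ < ε ∧ ‖S k - T k‖ < ε := by
    intro k hk
    have hε'ε : ε' ≤ ε := by rw [hε'def]; linarith
    constructor
    · exact lt_of_lt_of_le (hclose k hk.1).1 hε'ε
    · have hSk : S k = S₀ k := by simp only [hSdef]; rw [if_pos hk]
      rw [hSk]
      have hb1 : ‖S₀ k - T k‖ ≤ ‖S' k - T' k‖ + ε' := by
        simp only [hT'def]
        exact hS₀d k
      have hb2 : ‖S' k - T' k‖ ≤ ‖S' k - Th k‖ + ‖Th k - T' k‖ := by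
        calc ‖S' k - T' k‖ = ‖(S' k - Th k) + (Th k - T' k)‖ := by congr 1; abel
          _ ≤ _ := norm_add_le _ _
      have hb3 : ‖S' k - Th k‖ < ε' := (hclose k hk.1).2
      have hb4 : ‖Th k - T' k‖ ≤ 1 - ‖T' k‖ := hThd k
      have hkC : 1 - r < c k := hk.2
      have hb5 : 1 - ‖T' k‖ < r := by linarith [hcTnorm k]
      have hεfin : 2 * ε' + r < ε₁ := by
        rw [hε'def]
        rw [hε'def] at hrle
        linarith
      calc ‖S₀ k - T k‖ ≤ ‖S' k - T' k‖ + ε' := hb1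
        _ ≤ (‖S' k - Th k‖ + ‖Th k - T' k‖) + ε' := by linarith
        _ < (ε' + r) + ε' := by linarith
        _ < ε₁ := by linarith
        _ ≤ ε := hε₁le
  exact ⟨A', y, S, z, hy1, hSnorm, hzn, hA'sum, hfinal_close, heval⟩
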